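/- Let T = A ∪ B and X = (X(t) : t ∈ T) a stochastic process. Suppose (1) there exist A₁, A₂ ⊆ A such that X_{A₁} is independent of X_{A∖A₁} given X_{A₂}, and (2) there exists A_b ⊆ A∖A₁ such that X_A is independent of X_B given X_{A_b}. Then X_{B ∪ (A∖A₁)} is independent of X_{A₁} given X_{A₂}. -/

import Mathlib

open MeasureTheory ProbabilityTheory

/-- The σ-algebra generated by the random variables `(X t : t ∈ S)`. -/
def procSigma {T Ω : Type*} [MeasurableSpace Ω] (X : T → Ω → ℝ) (S : Set T) :
    MeasurableSpace Ω :=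
  ⨆ t ∈ S, MeasurableSpace.comap (X t) inferInstance

theorem procSigma_le {T Ω : Type*} [m : MeasurableSpace Ω] {X : T → Ω → ℝ}
    (hX : ∀ t, Measurable (X t)) (S : Set T) : procSigma X S ≤ m :=
  iSup₂_le fun t _ => (hX t).comap_le

section Aux

variable {Ω : Type*} {mΩ : MeasurableSpace Ω} {μ : MeasureTheory.Measure Ω}

local notation "I[" s "]" => Set.indicator s (fun _ => (1 : ℝ))

lemma norm_indicator_one_le' (s : Set Ω) (x : Ω) : ‖I[s] x‖ ≤ 1 := by
  by_cases hx : x ∈ s <;> simp [Set.indicator_of_mem, Set.indicator_of_notMem, hx]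

lemma indicator_one_integrable [IsFiniteMeasure μ] {s : Set Ω} (hs : MeasurableSet s) :
    Integrable I[s] μ :=
  (integrable_const 1).indicator hs

lemma indicator_inter_apply (s t : Set Ω) (x : Ω) :
    I[s ∩ t] x = I[s] x * I[t] x := by
  by_cases hs : x ∈ s <;> by_cases ht : x ∈ t <;>
    simp [Set.indicator_of_mem, Set.indicator_of_notMem, hs, ht, Set.mem_inter_iff]

lemma indicator_eq_indicator_one_mul (s : Set Ω) (g : Ω → ℝ) (x : Ω) :
    s.indicator g x = I[s] x * g x := by
  by_cases hs : x ∈ s <;> simp [Set.indicator_of_mem, Set.indicator_of_notMem, hs]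

lemma ae_norm_condexp_indicator_le (m : MeasurableSpace Ω) (s : Set Ω) :
    ∀ᵐ x ∂μ, ‖(μ[I[s]|m]) x‖ ≤ 1 := by
  have h : ∀ᵐ x ∂μ, |I[s] x| ≤ ((1 : NNReal) : ℝ) := by
    refine Filter.Eventually.of_forall fun x => ?_
    simpa [Real.norm_eq_abs] using norm_indicator_one_le' s x
  have := ae_bdd_condExp_of_ae_bdd (m := m) (μ := μ) h
  simpa [Real.norm_eq_abs] using this

lemma isPiSystem_inter_meas (m₁ m₂ : MeasurableSpace Ω) :
    IsPiSystem (Set.image2 (· ∩ ·) {s | MeasurableSet[m₁] s} {s | MeasurableSet[m₂] s}) := by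
  rintro u ⟨t₁, ht₁, v₁, hv₁, rfl⟩ u' ⟨t₂, ht₂, v₂, hv₂, rfl⟩ -
  exact ⟨t₁ ∩ t₂, ht₁.inter ht₂, v₁ ∩ v₂, hv₁.inter hv₂, by rw [Set.inter_inter_inter_comm]⟩

lemma sup_eq_generateFrom_inter (m₁ m₂ : MeasurableSpace Ω) :
    m₁ ⊔ m₂ = MeasurableSpace.generateFrom
      (Set.image2 (· ∩ ·) {s | MeasurableSet[m₁] s} {s | MeasurableSet[m₂] s}) := by
  refine le_antisymm (sup_le ?_ ?_) (MeasurableSpace.generateFrom_le ?_)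
  · intro s hs
    exact MeasurableSpace.measurableSet_generateFrom
      ⟨s, hs, Set.univ, MeasurableSet.univ, Set.inter_univ s⟩
  · intro s hs
    exact MeasurableSpace.measurableSet_generateFrom
      ⟨Set.univ, MeasurableSet.univ, s, hs, Set.univ_inter s⟩
  · rintro u ⟨t, ht, v, hv, rfl⟩
    exact MeasurableSet.inter ((le_sup_left : m₁ ≤ m₁ ⊔ m₂) t ht)
      ((le_sup_right : m₂ ≤ m₁ ⊔ m₂) v hv)

/-- Two integrable functions with equal total integral and equal integrals on a generating
π-system have equal integrals on the generated σ-algebra. -/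
lemma setIntegral_eq_on_of_generateFrom {m : MeasurableSpace Ω} (hle : m ≤ mΩ)
    [IsFiniteMeasure μ] {C : Set (Set Ω)} (h_eq : m = MeasurableSpace.generateFrom C)
    (hC : IsPiSystem C) {g₁ g₂ : Ω → ℝ} (h₁ : Integrable g₁ μ) (h₂ : Integrable g₂ μ)
    (huniv : ∫ x, g₁ x ∂μ = ∫ x, g₂ x ∂μ)
    (hbase : ∀ u ∈ C, ∫ x in u, g₁ x ∂μ = ∫ x in u, g₂ x ∂μ) :
    ∀ u, MeasurableSet[m] u → ∫ x in u, g₁ x ∂μ = ∫ x in u, g₂ x ∂μ := by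
  letI : MeasurableSpace Ω := mΩ
  intro u hu
  refine @MeasurableSpace.induction_on_inter Ω m
    (fun u _ => ∫ x in u, g₁ x ∂μ = ∫ x in u, g₂ x ∂μ) C h_eq hC ?_ hbase ?_ ?_ u hu
  · simp
  · intro t htm ht
    have ht' : MeasurableSet[mΩ] t := hle t htm
    have e₁ := integral_add_compl ht' h₁
    have e₂ := integral_add_compl ht' h₂
    linarith
  · intro f hdisj hmeas hind
    rw [integral_iUnion (fun i => hle _ (hmeas i)) hdisj h₁.integrableOn,
      integral_iUnion (fun i => hle _ (hmeas i)) hdisj h₂.integrableOn]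
    exact tsum_congr hind

/-- Key integral identity: multiplying a conditional expectation by a bounded
`n`-measurable factor and integrating is the same as doing so with the original function. -/
lemma integral_mul_condexp_eq {n : MeasurableSpace Ω} (hn : n ≤ mΩ) [IsFiniteMeasure μ]
    {f g : Ω → ℝ} (hf : StronglyMeasurable[n] f) (c : ℝ) (hfb : ∀ᵐ x ∂μ, ‖f x‖ ≤ c)
    (hg : Integrable g μ) :
    ∫ x, f x * (μ[g|n]) x ∂μ = ∫ x, f x * g x ∂μ := by
  letI : MeasurableSpace Ω := mΩ
  have hpull : μ[f * g|n] =ᵐ[μ] f * μ[g|n] :=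
    condExp_stronglyMeasurable_mul_of_bound hn hf hg c hfb
  have hint : Integrable (f * g) μ := by
    have := hg.bdd_mul (hf.mono hn).aestronglyMeasurable hfb
    simpa [Pi.mul_def] using this
  calc ∫ x, f x * (μ[g|n]) x ∂μ = ∫ x, (f * μ[g|n]) x ∂μ := rfl
    _ = ∫ x, (μ[f * g|n]) x ∂μ := (integral_congr_ae hpull).symm
    _ = ∫ x, (f * g) x ∂μ := integral_condExp hn
    _ = ∫ x, f x * g x ∂μ := rfl

variable [StandardBorelSpace Ω]

/-- Doob characterization, forward direction. -/
lemma condexp_sup_of_condIndep {m' m₁ m₂ : MeasurableSpace Ω} (hm' : m' ≤ mΩ)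
    (hm₁ : m₁ ≤ mΩ) (hm₂ : m₂ ≤ mΩ) [IsProbabilityMeasure μ]
    (h : CondIndep m' m₁ m₂ hm' μ) {s : Set Ω} (hs : MeasurableSet[m₂] s) :
    (μ⟦s | m₁ ⊔ m'⟧) =ᵐ[μ] μ⟦s | m'⟧ := by
  letI : MeasurableSpace Ω := mΩ
  have hsup : m₁ ⊔ m' ≤ mΩ := sup_le hm₁ hm'
  have hf_int : Integrable I[s] μ := indicator_one_integrable (hm₂ s hs)
  have hprod := (condIndep_iff m' m₁ m₂ hm' hm₁ hm₂ μ).1 h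
  set g : Ω → ℝ := μ[I[s]|m'] with hg_def
  have hg_bdd : ∀ᵐ x ∂μ, ‖g x‖ ≤ 1 := ae_norm_condexp_indicator_le m' s
  have key : ∀ u, MeasurableSet[m₁ ⊔ m'] u →
      ∫ x in u, g x ∂μ = ∫ x in u, I[s] x ∂μ := by
    refine setIntegral_eq_on_of_generateFrom hsup (sup_eq_generateFrom_inter m₁ m')
      (isPiSystem_inter_meas m₁ m') integrable_condExp hf_int (integral_condExp hm') ?_
    rintro u ⟨t, ht, v, hv, rfl⟩
    have hIt_int : Integrable I[t] μ := indicator_one_integrable (hm₁ t ht)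
    have hIts_int : Integrable I[t ∩ s] μ :=
      indicator_one_integrable ((hm₁ t ht).inter (hm₂ s hs))
    have hv' : MeasurableSet[m'] v := hv
    -- left side
    have L : ∫ x in t ∩ v, g x ∂μ = ∫ x in v, (g * μ[I[t]|m']) x ∂μ := by
      have pull : μ[g * I[t]|m'] =ᵐ[μ] g * μ[I[t]|m'] :=
        condExp_stronglyMeasurable_mul_of_bound hm' stronglyMeasurable_condExp hIt_int 1 hg_bdd
      have hgt_int : Integrable (g * I[t]) μ := by
        have := hIt_int.bdd_mul (stronglyMeasurable_condExp.mono hm').aestronglyMeasurable hg_bdd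
        simpa [Pi.mul_def] using this
      calc ∫ x in t ∩ v, g x ∂μ = ∫ x in v ∩ t, g x ∂μ := by rw [Set.inter_comm]
        _ = ∫ x in v, t.indicator g x ∂μ := (setIntegral_indicator (hm₁ t ht)).symm
        _ = ∫ x in v, (g * I[t]) x ∂μ := by
            refine setIntegral_congr_fun (hm' v hv') fun x _ => ?_
            simp only [Pi.mul_apply]
            rw [indicator_eq_indicator_one_mul t g x, mul_comm]
        _ = ∫ x in v, (μ[g * I[t]|m']) x ∂μ := (setIntegral_condExp hm' hgt_int hv').symm
        _ = ∫ x in v, (g * μ[I[t]|m']) x ∂μ :=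
            setIntegral_congr_ae (hm' v hv') (pull.mono fun x hx _ => hx)
    -- right side
    have R : ∫ x in t ∩ v, I[s] x ∂μ = ∫ x in v, ((μ[I[t]|m']) * g) x ∂μ := by
      calc ∫ x in t ∩ v, I[s] x ∂μ = ∫ x in v ∩ t, I[s] x ∂μ := by rw [Set.inter_comm]
        _ = ∫ x in v, t.indicator I[s] x ∂μ := (setIntegral_indicator (hm₁ t ht)).symm
        _ = ∫ x in v, I[t ∩ s] x ∂μ := by
            refine setIntegral_congr_fun (hm' v hv') fun x _ => ?_
            rw [Set.indicator_indicator]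
        _ = ∫ x in v, (μ[I[t ∩ s]|m']) x ∂μ := (setIntegral_condExp hm' hIts_int hv').symm
        _ = ∫ x in v, ((μ[I[t]|m']) * g) x ∂μ :=
            setIntegral_congr_ae (hm' v hv')
              ((hprod t s ht hs).mono fun x hx _ => hx)
    rw [L, R]
    refine setIntegral_congr_fun (hm' v hv') fun x _ => ?_
    simp only [Pi.mul_apply]; ring
  have := ae_eq_condExp_of_forall_setIntegral_eq hsup hf_int
    (fun u _ _ => integrable_condExp.integrableOn)
    (fun u hu _ => key u hu)
    (StronglyMeasurable.aestronglyMeasurable (stronglyMeasurable_condExp.mono le_sup_right))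
  exact this.symm

/-- Doob characterization, backward direction. -/
lemma condIndep_of_condexp_sup {m' m₁ m₂ : MeasurableSpace Ω} (hm' : m' ≤ mΩ)
    (hm₁ : m₁ ≤ mΩ) (hm₂ : m₂ ≤ mΩ) [IsProbabilityMeasure μ]
    (h : ∀ s, MeasurableSet[m₂] s → (μ⟦s | m₁ ⊔ m'⟧) =ᵐ[μ] μ⟦s | m'⟧) :
    CondIndep m' m₁ m₂ hm' μ := by
  letI : MeasurableSpace Ω := mΩ
  rw [condIndep_iff m' m₁ m₂ hm' hm₁ hm₂ μ]
  intro t s ht hs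
  have hsup : m₁ ⊔ m' ≤ mΩ := sup_le hm₁ hm'
  have hIt_int : Integrable I[t] μ := indicator_one_integrable (hm₁ t ht)
  have hIs_int : Integrable I[s] μ := indicator_one_integrable (hm₂ s hs)
  have hits : (Set.indicator (t ∩ s) fun _ => (1:ℝ)) = I[t] * I[s] := by
    funext x; rw [indicator_inter_apply]; rfl
  have step0 : (μ⟦t ∩ s|m'⟧) =ᵐ[μ] μ[μ[I[t] * I[s]|m₁ ⊔ m']|m'] := by
    have : (μ⟦t ∩ s|m'⟧) = μ[I[t] * I[s]|m'] := by rw [← hits]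
    rw [this]
    exact (condExp_condExp_of_le le_sup_right hsup).symm
  have step1 : μ[I[t] * I[s]|m₁ ⊔ m'] =ᵐ[μ] I[t] * μ[I[s]|m'] := by
    have h1 : μ[I[t] * I[s]|m₁ ⊔ m'] =ᵐ[μ] I[t] * μ[I[s]|m₁ ⊔ m'] :=
      condExp_stronglyMeasurable_mul_of_bound hsup
        ((stronglyMeasurable_const.indicator ht).mono le_sup_left) hIs_int 1
        (Filter.Eventually.of_forall (norm_indicator_one_le' t))
    exact h1.trans (Filter.EventuallyEq.mul Filter.EventuallyEq.rfl (h s hs))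
  have step2 : μ[I[t] * μ[I[s]|m']|m'] =ᵐ[μ] μ[I[s]|m'] * μ[I[t]|m'] := by
    have heq : I[t] * μ[I[s]|m'] = μ[I[s]|m'] * I[t] := mul_comm _ _
    rw [heq]
    exact condExp_stronglyMeasurable_mul_of_bound hm' stronglyMeasurable_condExp hIt_int 1
      (ae_norm_condexp_indicator_le m' s)
  calc (μ⟦t ∩ s|m'⟧) =ᵐ[μ] μ[μ[I[t] * I[s]|m₁ ⊔ m']|m'] := step0
    _ =ᵐ[μ] μ[I[t] * μ[I[s]|m']|m'] := condExp_congr_ae step1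
    _ =ᵐ[μ] μ[I[s]|m'] * μ[I[t]|m'] := step2
    _ = (μ⟦t|m'⟧) * μ⟦s|m'⟧ := mul_comm _ _

/-- Weak union: if `m₁ ⊥ m₂ | m'` and `m' ≤ n ≤ m₁`, then conditioning on `m₂ ⊔ n`
or on `n` gives the same conditional expectation for `m₁`-sets. -/
lemma condexp_weak_union {m' m₁ m₂ n : MeasurableSpace Ω} (hm' : m' ≤ mΩ)
    (hm₁ : m₁ ≤ mΩ) (hm₂ : m₂ ≤ mΩ) [IsProbabilityMeasure μ]
    (hn₁ : n ≤ m₁) (hn' : m' ≤ n)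
    (h : CondIndep m' m₁ m₂ hm' μ) {w : Set Ω} (hw : MeasurableSet[m₁] w) :
    (μ⟦w | m₂ ⊔ n⟧) =ᵐ[μ] μ⟦w | n⟧ := by
  letI : MeasurableSpace Ω := mΩ
  have hn : n ≤ mΩ := hn₁.trans hm₁
  have hsup₂ : m₂ ⊔ n ≤ mΩ := sup_le hm₂ hn
  have hsup₁ : m₁ ⊔ m' ≤ mΩ := sup_le hm₁ hm'
  have hw' : MeasurableSet w := hm₁ w hw
  have hIw_int : Integrable I[w] μ := indicator_one_integrable hw'
  set g : Ω → ℝ := μ[I[w]|n] with hg_def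
  have hg_bdd : ∀ᵐ x ∂μ, ‖g x‖ ≤ 1 := ae_norm_condexp_indicator_le n w
  have key : ∀ u, MeasurableSet[m₂ ⊔ n] u →
      ∫ x in u, g x ∂μ = ∫ x in u, I[w] x ∂μ := by
    refine setIntegral_eq_on_of_generateFrom hsup₂ (sup_eq_generateFrom_inter m₂ n)
      (isPiSystem_inter_meas m₂ n) integrable_condExp hIw_int (integral_condExp hn) ?_
    rintro u ⟨t, ht, v, hv, rfl⟩
    have hvm₁ : MeasurableSet[m₁] v := hn₁ v hv
    have hv' : MeasurableSet v := hn v hv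
    have hIt_int : Integrable I[t] μ := indicator_one_integrable (hm₂ t ht)
    -- φ := μ[I[t]|m']
    set φ : Ω → ℝ := μ[I[t]|m'] with hφ_def
    have hφ_bdd : ∀ᵐ x ∂μ, ‖φ x‖ ≤ 1 := ae_norm_condexp_indicator_le m' t
    have hdiamond : μ[I[t]|m₁ ⊔ m'] =ᵐ[μ] φ :=
      condexp_sup_of_condIndep hm' hm₁ hm₂ h ht
    -- A : right side
    have A : ∫ x in t ∩ v, I[w] x ∂μ = ∫ x, I[v ∩ w] x * φ x ∂μ := by
      have hvw₁ : MeasurableSet[m₁] (v ∩ w) := hvm₁.inter hw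
      have hIvw : StronglyMeasurable[m₁ ⊔ m'] I[v ∩ w] :=
        (stronglyMeasurable_const.indicator hvw₁).mono le_sup_left
      calc ∫ x in t ∩ v, I[w] x ∂μ
          = ∫ x, (t ∩ v).indicator I[w] x ∂μ := by
            rw [integral_indicator ((hm₂ t ht).inter hv')]
        _ = ∫ x, I[v ∩ w] x * I[t] x ∂μ := by
            refine integral_congr_ae (Filter.Eventually.of_forall fun x => ?_)
            rw [Set.indicator_indicator]
            have : t ∩ v ∩ w = (v ∩ w) ∩ t := by
              ext x; simp only [Set.mem_inter_iff]; tauto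
            rw [this, indicator_inter_apply]
        _ = ∫ x, I[v ∩ w] x * (μ[I[t]|m₁ ⊔ m']) x ∂μ :=
            (integral_mul_condexp_eq hsup₁ hIvw 1
              (Filter.Eventually.of_forall (norm_indicator_one_le' (v ∩ w))) hIt_int).symm
        _ = ∫ x, I[v ∩ w] x * φ x ∂μ := by
            refine integral_congr_ae (hdiamond.mono fun x hx => ?_)
            dsimp only; rw [hx]
    -- B : left side
    have B : ∫ x in t ∩ v, g x ∂μ = ∫ x, (I[v] x * φ x) * I[w] x ∂μ := by
      have hIvg : StronglyMeasurable[m₁ ⊔ m'] (fun x => I[v] x * g x) :=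
        (((stronglyMeasurable_const.indicator hvm₁).mul
          (stronglyMeasurable_condExp.mono hn₁)).mono le_sup_left)
      have hIvg_bdd : ∀ᵐ x ∂μ, ‖I[v] x * g x‖ ≤ 1 := by
        refine hg_bdd.mono fun x hx => ?_
        rw [norm_mul]
        calc ‖I[v] x‖ * ‖g x‖ ≤ 1 * 1 :=
              mul_le_mul (norm_indicator_one_le' v x) hx (norm_nonneg _) zero_le_one
          _ = 1 := by ring
      have hIvφ : StronglyMeasurable[n] (fun x => I[v] x * φ x) :=
        (stronglyMeasurable_const.indicator hv).mul (stronglyMeasurable_condExp.mono hn')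
      have hIvφ_bdd : ∀ᵐ x ∂μ, ‖I[v] x * φ x‖ ≤ 1 := by
        refine hφ_bdd.mono fun x hx => ?_
        rw [norm_mul]
        calc ‖I[v] x‖ * ‖φ x‖ ≤ 1 * 1 :=
              mul_le_mul (norm_indicator_one_le' v x) hx (norm_nonneg _) zero_le_one
          _ = 1 := by ring
      calc ∫ x in t ∩ v, g x ∂μ
          = ∫ x, (t ∩ v).indicator g x ∂μ := by
            rw [integral_indicator ((hm₂ t ht).inter hv')]
        _ = ∫ x, (I[v] x * g x) * I[t] x ∂μ := by
            refine integral_congr_ae (Filter.Eventually.of_forall fun x => ?_)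
            rw [indicator_eq_indicator_one_mul (t ∩ v) g x, indicator_inter_apply]
            ring
        _ = ∫ x, (I[v] x * g x) * (μ[I[t]|m₁ ⊔ m']) x ∂μ :=
            (integral_mul_condexp_eq hsup₁ hIvg 1 hIvg_bdd hIt_int).symm
        _ = ∫ x, (I[v] x * φ x) * g x ∂μ := by
            refine integral_congr_ae (hdiamond.mono fun x hx => ?_)
            dsimp only; rw [hx]; ring
        _ = ∫ x, (I[v] x * φ x) * (μ[I[w]|n]) x ∂μ := rfl
        _ = ∫ x, (I[v] x * φ x) * I[w] x ∂μ :=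
            integral_mul_condexp_eq hn hIvφ 1 hIvφ_bdd hIw_int
    rw [B, A]
    refine integral_congr_ae (Filter.Eventually.of_forall fun x => ?_)
    dsimp only; rw [indicator_inter_apply]; ring
  have := ae_eq_condExp_of_forall_setIntegral_eq hsup₂ hIw_int
    (fun u _ _ => integrable_condExp.integrableOn)
    (fun u hu _ => key u hu)
    (StronglyMeasurable.aestronglyMeasurable (stronglyMeasurable_condExp.mono le_sup_right))
  exact this.symm

end Aux

section ProcSigma

lemma procSigma_mono {T Ω : Type*} [MeasurableSpace Ω] {X : T → Ω → ℝ} {S S' : Set T}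
    (h : S ⊆ S') : procSigma X S ≤ procSigma X S' :=
  biSup_mono h

lemma procSigma_union {T Ω : Type*} [MeasurableSpace Ω] (X : T → Ω → ℝ) (S S' : Set T) :
    procSigma X (S ∪ S') = procSigma X S ⊔ procSigma X S' :=
  iSup_union

end ProcSigma

/-- Let `T = A ∪ B` and `X = (X t : t ∈ T)` be a stochastic process. Suppose
(1) `A₁, A₂ ⊆ A` are such that `X_{A₁}` is conditionally independent of `X_{A \ A₁}`
given `X_{A₂}`, and (2) there is `A_b ⊆ A \ A₁` such that `X_A` and `X_B` are
conditionally independent given `X_{A_b}`. Then `X_{B ∪ (A \ A₁)}` and `X_{A₁}` are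
conditionally independent given `X_{A₂}`. -/
theorem condIndep_separation {T Ω : Type*} [m : MeasurableSpace Ω]
    [StandardBorelSpace Ω] (μ : Measure Ω) [IsProbabilityMeasure μ]
    (X : T → Ω → ℝ) (hX : ∀ t, Measurable (X t))
    (A B : Set T) (hT : A ∪ B = Set.univ)
    (A₁ A₂ : Set T) (hA₁ : A₁ ⊆ A) (hA₂ : A₂ ⊆ A)
    (h1 : CondIndep (procSigma X A₂) (procSigma X A₁) (procSigma X (A \ A₁))
      (procSigma_le hX A₂) μ)
    (h2 : ∃ Ab : Set T, Ab ⊆ A \ A₁ ∧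
      CondIndep (procSigma X Ab) (procSigma X A) (procSigma X B)
        (procSigma_le hX Ab) μ) :
    CondIndep (procSigma X A₂) (procSigma X (B ∪ (A \ A₁))) (procSigma X A₁)
      (procSigma_le hX A₂) μ := by
  obtain ⟨Ab, hAb, h2⟩ := h2
  set n : MeasurableSpace Ω := procSigma X ((A \ A₁) ∪ A₂) with hn_def
  letI : MeasurableSpace Ω := m
  have hn₁ : n ≤ procSigma X A :=
    procSigma_mono (Set.union_subset Set.diff_subset hA₂)
  have hn' : procSigma X Ab ≤ n :=
    procSigma_mono (hAb.trans Set.subset_union_left)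
  have stepII : ∀ w, MeasurableSet[procSigma X A₁] w →
      (μ⟦w | procSigma X B ⊔ n⟧) =ᵐ[μ] μ⟦w | n⟧ := fun w hw =>
    condexp_weak_union (procSigma_le hX Ab) (procSigma_le hX A) (procSigma_le hX B)
      hn₁ hn' h2 (procSigma_mono hA₁ w hw)
  have stepIII : ∀ w, MeasurableSet[procSigma X A₁] w →
      (μ⟦w | n⟧) =ᵐ[μ] μ⟦w | procSigma X A₂⟧ := by
    intro w hw
    have h := condexp_sup_of_condIndep (procSigma_le hX A₂) (procSigma_le hX (A \ A₁))
      (procSigma_le hX A₁) h1.symm hw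
    rwa [hn_def, procSigma_union]
  refine condIndep_of_condexp_sup (procSigma_le hX A₂) (procSigma_le hX (B ∪ (A \ A₁)))
    (procSigma_le hX A₁) ?_
  intro s hs
  have hrw : procSigma X (B ∪ (A \ A₁)) ⊔ procSigma X A₂ = procSigma X B ⊔ n := by
    rw [hn_def, procSigma_union, procSigma_union, sup_assoc]
  rw [hrw]
  exact (stepII s hs).trans (stepIII s hs)
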